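/- Let (Z^{(N)})_{N∈ℕ} be a sequence of DBPCs satisfying Assumption A, and let (b_N)_{N∈ℕ} be a sequence of positive real numbers with b_N → ∞ as N → ∞. Then for every fixed g ∈ ℕ₀ (along those N for which P(Z_g^{(N)} ≥ b_N) > 0): P(Z_{g+i}^{(N)} > 0 for all i ≥ 0 | Z_g^{(N)} ≥ b_N) → 1 as N → ∞. -/

import Mathlib

open MeasureTheory ProbabilityTheory Filter

open Finset
open scoped ENNReal NNReal

/-- A discrete-time branching process with cooperation (DBPC) with offspring
distribution `Lo`, cooperation distribution `Lc`, started at `k₀`. -/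
structure DBPC {Ω : Type*} [MeasurableSpace Ω] (P : Measure Ω)
    (Lo Lc : PMF ℕ) (k₀ : ℕ) where
  /-- offspring variables `X g i` -/
  X : ℕ → ℕ → Ω → ℕ
  /-- cooperation variables `Y g i j` -/
  Y : ℕ → ℕ → ℕ → Ω → ℕ
  /-- the process -/
  Z : ℕ → Ω → ℕ
  measX : ∀ g i, Measurable (X g i)
  measY : ∀ g i j, Measurable (Y g i j)
  measZ : ∀ g, Measurable (Z g)
  indep : iIndepFun
    (fun p : (ℕ × ℕ) ⊕ (ℕ × ℕ × ℕ) =>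
      Sum.elim (fun q : ℕ × ℕ => X q.1 q.2)
        (fun q : ℕ × ℕ × ℕ => Y q.1 q.2.1 q.2.2) p) P
  distX : ∀ g i, P.map (X g i) = Lo.toMeasure
  distY : ∀ g i j, P.map (Y g i j) = Lc.toMeasure
  init : ∀ᵐ ω ∂P, Z 0 ω = k₀
  step : ∀ g : ℕ, ∀ᵐ ω ∂P, Z (g + 1) ω =
    (∑ i ∈ Finset.Icc 1 (Z g ω), X (g + 1) i ω) +
      ∑ i ∈ Finset.Icc 1 (Z g ω), ∑ j ∈ Finset.Ico 1 i, Y (g + 1) i j ω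

/-- The mean of a probability distribution on `ℕ`. -/
noncomputable def pmfMean (L : PMF ℕ) : ℝ := ∑' j : ℕ, (j : ℝ) * (L j).toReal

/-- The variance of a probability distribution on `ℕ`. -/
noncomputable def pmfVar (L : PMF ℕ) : ℝ :=
  ∑' j : ℕ, ((j : ℝ) - pmfMean L) ^ 2 * (L j).toReal


set_option linter.unusedSectionVars false

lemma measurable_comp_nat {α : Type*} {m : MeasurableSpace α} {g : α → ℕ} {W : ℕ → α → ℕ}
    (hg : Measurable[m] g) (hW : ∀ k, Measurable[m] (W k)) :
    Measurable[m] fun ω => W (g ω) ω := by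
  apply measurable_to_countable'
  intro y
  have : (fun ω => W (g ω) ω) ⁻¹' {y} = ⋃ k, g ⁻¹' {k} ∩ W k ⁻¹' {y} := by
    ext ω
    simp only [Set.mem_preimage, Set.mem_singleton_iff, Set.mem_iUnion, Set.mem_inter_iff]
    exact ⟨fun h => ⟨g ω, rfl, h⟩, fun ⟨k, hk, h⟩ => by rw [hk]; exact h⟩
  rw [this]
  exact MeasurableSet.iUnion fun k =>
    (hg (measurableSet_singleton k)).inter (hW k (measurableSet_singleton y))

lemma two_mul_card_pairs (k : ℕ) :
    2 * ((Finset.Icc 1 k).sigma fun i => Finset.Ico 1 i).card = k * (k - 1) := by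
  rw [Finset.card_sigma]
  induction k with
  | zero => simp
  | succ k ih =>
    rw [show Finset.Icc 1 (k+1) = insert (k+1) (Finset.Icc 1 k) by
      ext x; simp only [Finset.mem_Icc, Finset.mem_insert]; omega]
    rw [Finset.sum_insert (by simp)]
    rw [Nat.mul_add, ih, Nat.card_Ico, Nat.add_sub_cancel]
    cases k with
    | zero => simp
    | succ m =>
      simp only [Nat.succ_sub_one]
      ring

namespace DBPCaux

abbrev Idx := (ℕ × ℕ) ⊕ (ℕ × ℕ × ℕ)

def gen : Idx → ℕ := fun p => Sum.elim (fun q => q.1) (fun q => q.1) p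

variable {Ωs : Type*} [MeasurableSpace Ωs] {P : Measure Ωs} [IsProbabilityMeasure P]
  {Lo Lc : PMF ℕ} {k₀ : ℕ}

/-- the family of all basic variables -/
def vars (B : DBPC P Lo Lc k₀) : Idx → Ωs → ℕ := fun p =>
  Sum.elim (fun q : ℕ × ℕ => B.X q.1 q.2)
    (fun q : ℕ × ℕ × ℕ => B.Y q.1 q.2.1 q.2.2) p

lemma measurable_vars (B : DBPC P Lo Lc k₀) (p : Idx) : Measurable (vars B p) := by
  cases p with
  | inl q => exact B.measX q.1 q.2
  | inr q => exact B.measY q.1 q.2.1 q.2.2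

/-- σ-algebra generated by variables of generation ≤ n -/
def Fsig (B : DBPC P Lo Lc k₀) (n : ℕ) : MeasurableSpace Ωs :=
  ⨆ p ∈ {p : Idx | gen p ≤ n}, MeasurableSpace.comap (vars B p) inferInstance

/-- σ-algebra generated by variables of generation exactly n -/
def Gsig (B : DBPC P Lo Lc k₀) (n : ℕ) : MeasurableSpace Ωs :=
  ⨆ p ∈ {p : Idx | gen p = n}, MeasurableSpace.comap (vars B p) inferInstance

lemma Fsig_le (B : DBPC P Lo Lc k₀) (n : ℕ) : Fsig B n ≤ ‹MeasurableSpace Ωs› := by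
  refine iSup₂_le fun p _ => ?_
  exact (measurable_vars B p).comap_le

lemma Gsig_le (B : DBPC P Lo Lc k₀) (n : ℕ) : Gsig B n ≤ ‹MeasurableSpace Ωs› := by
  refine iSup₂_le fun p _ => ?_
  exact (measurable_vars B p).comap_le

lemma Fsig_mono (B : DBPC P Lo Lc k₀) {m n : ℕ} (h : m ≤ n) : Fsig B m ≤ Fsig B n := by
  refine iSup₂_le fun p hp => ?_
  exact le_iSup₂ (f := fun (p : Idx) (_ : p ∈ {p : Idx | gen p ≤ n}) =>
    MeasurableSpace.comap (vars B p) inferInstance) p (le_trans hp h)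

lemma measurable_vars_Fsig (B : DBPC P Lo Lc k₀) {p : Idx} {n : ℕ} (hp : gen p ≤ n) :
    Measurable[Fsig B n] (vars B p) := by
  rw [measurable_iff_comap_le]
  exact le_iSup₂ (f := fun (p : Idx) (_ : p ∈ {p : Idx | gen p ≤ n}) =>
    MeasurableSpace.comap (vars B p) inferInstance) p hp

lemma measurable_Y_Gsig (B : DBPC P Lo Lc k₀) {n i j : ℕ} :
    Measurable[Gsig B n] (B.Y n i j) := by
  rw [measurable_iff_comap_le]
  exact le_iSup₂ (f := fun (p : Idx) (_ : p ∈ {p : Idx | gen p = n}) =>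
    MeasurableSpace.comap (vars B p) inferInstance) (Sum.inr (n, i, j)) rfl

lemma indep_Fsig_Gsig (B : DBPC P Lo Lc k₀) (n : ℕ) :
    Indep (Fsig B n) (Gsig B (n + 1)) P := by
  apply indep_iSup_of_disjoint (fun p => (measurable_vars B p).comap_le) B.indep
  rw [Set.disjoint_left]
  intro p hp hp'
  simp only [Set.mem_setOf_eq] at hp hp'
  omega




lemma pmf_lintegral (p : PMF ℕ) (f : ℕ → ℝ≥0∞) :
    ∫⁻ n, f n ∂p.toMeasure = ∑' n, f n * p n := by
  rw [lintegral_countable']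
  congr 1; ext n
  rw [p.toMeasure_apply_singleton _ (measurableSet_singleton n)]

lemma pmf_summable_toReal (p : PMF ℕ) : Summable (fun j => (p j).toReal) :=
  ENNReal.summable_toReal (by simp [p.tsum_coe])

lemma pmf_integrable {p : PMF ℕ} {f : ℕ → ℝ}
    (h : Summable fun j => |f j| * (p j).toReal) : Integrable f p.toMeasure := by
  refine ⟨(measurable_from_top (f := f)).aestronglyMeasurable, ?_⟩
  have hre : ∀ n : ℕ, ‖f n‖ₑ * p n = ENNReal.ofReal (|f n| * (p n).toReal) := by
    intro n
    rw [ENNReal.ofReal_mul (abs_nonneg _), ENNReal.ofReal_toReal (p.apply_ne_top n),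
      Real.enorm_eq_ofReal_abs]
  have : (∫⁻ n, ‖f n‖ₑ ∂p.toMeasure) = ENNReal.ofReal (∑' j, |f j| * (p j).toReal) := by
    rw [pmf_lintegral]
    rw [ENNReal.ofReal_tsum_of_nonneg (fun j => by positivity) h]
    exact tsum_congr hre
  rw [HasFiniteIntegral, this]
  exact ENNReal.ofReal_lt_top

lemma pmf_integral {p : PMF ℕ} {f : ℕ → ℝ}
    (h : Summable fun j => |f j| * (p j).toReal) :
    ∫ n, f n ∂p.toMeasure = ∑' j, f j * (p j).toReal := by
  rw [PMF.integral_eq_tsum _ _ (pmf_integrable h)]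
  exact tsum_congr fun j => by rw [smul_eq_mul, mul_comm]

section moments
variable {Ωs : Type*} [MeasurableSpace Ωs] {P : Measure Ωs} [IsProbabilityMeasure P]
  {p : PMF ℕ} {Y : Ωs → ℕ}

lemma summable_abs_id_pmf (hfin : Summable fun j : ℕ => (j : ℝ) ^ 2 * (p j).toReal) :
    Summable fun j : ℕ => |(j : ℝ)| * (p j).toReal := by
  apply Summable.of_nonneg_of_le (fun j => by positivity)
    (fun j => ?_) (((pmf_summable_toReal p).add hfin))
  have h1 : |(j : ℝ)| = (j : ℝ) := abs_of_nonneg (by positivity)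
  have h2 : (j : ℝ) ≤ 1 + (j : ℝ) ^ 2 := by nlinarith [sq_nonneg ((j : ℝ) - 1)]
  have h3 : (0:ℝ) ≤ (p j).toReal := ENNReal.toReal_nonneg
  calc |(j : ℝ)| * (p j).toReal ≤ (1 + (j : ℝ) ^ 2) * (p j).toReal := by
        rw [h1]; exact mul_le_mul_of_nonneg_right h2 h3
    _ = (p j).toReal + (j : ℝ) ^ 2 * (p j).toReal := by ring

lemma summable_sq_shift (hfin : Summable fun j : ℕ => (j : ℝ) ^ 2 * (p j).toReal) (c : ℝ) :
    Summable fun j : ℕ => |((j : ℝ) - c) ^ 2| * (p j).toReal := by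
  apply Summable.of_nonneg_of_le (fun j => by positivity) (fun j => ?_)
    (((pmf_summable_toReal p).mul_left (2 * c ^ 2)).add (hfin.mul_left 2))
  have h3 : (0:ℝ) ≤ (p j).toReal := ENNReal.toReal_nonneg
  have h2 : |((j : ℝ) - c) ^ 2| = ((j : ℝ) - c) ^ 2 := abs_of_nonneg (by positivity)
  have h4 : ((j : ℝ) - c) ^ 2 ≤ 2 * c ^ 2 + 2 * (j : ℝ) ^ 2 := by nlinarith [sq_nonneg ((j:ℝ) + c)]
  calc |((j : ℝ) - c) ^ 2| * (p j).toReal ≤ (2 * c ^ 2 + 2 * (j : ℝ) ^ 2) * (p j).toReal := by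
        rw [h2]; exact mul_le_mul_of_nonneg_right h4 h3
    _ = 2 * c ^ 2 * (p j).toReal + 2 * ((j:ℝ) ^ 2 * (p j).toReal) := by ring

lemma memℒp_cast_of_dist (hY : Measurable Y) (hdist : P.map Y = p.toMeasure)
    (hfin : Summable fun j : ℕ => (j : ℝ) ^ 2 * (p j).toReal) :
    MemLp (fun ω => (Y ω : ℝ)) 2 P := by
  have h2 : MemLp (fun n : ℕ => (n : ℝ)) 2 p.toMeasure := by
    rw [memLp_two_iff_integrable_sq (measurable_from_top.aestronglyMeasurable)]
    apply pmf_integrable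
    exact hfin.congr fun j => by rw [abs_of_nonneg (by positivity : (0:ℝ) ≤ (j:ℝ)^2)]
  rw [← hdist] at h2
  exact (memLp_map_measure_iff measurable_from_top.aestronglyMeasurable
    hY.aemeasurable).1 h2

lemma integral_cast_of_dist (hY : Measurable Y) (hdist : P.map Y = p.toMeasure)
    (hfin : Summable fun j : ℕ => (j : ℝ) ^ 2 * (p j).toReal) :
    ∫ ω, (Y ω : ℝ) ∂P = pmfMean p := by
  have : ∫ ω, (Y ω : ℝ) ∂P = ∫ n, (n : ℝ) ∂(P.map Y) :=
    (integral_map hY.aemeasurable measurable_from_top.aestronglyMeasurable).symm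
  rw [this, hdist, pmf_integral (summable_abs_id_pmf hfin)]
  rfl

lemma variance_cast_of_dist (hY : Measurable Y) (hdist : P.map Y = p.toMeasure)
    (hfin : Summable fun j : ℕ => (j : ℝ) ^ 2 * (p j).toReal) :
    variance (fun ω => (Y ω : ℝ)) P = pmfVar p := by
  have hmem := memℒp_cast_of_dist hY hdist hfin
  rw [variance_eq_integral hmem.aestronglyMeasurable.aemeasurable]
  change ∫ ω, ((((fun ω => (Y ω : ℝ)) - fun _ => ∫ ω, (Y ω : ℝ) ∂P) ^ (2:ℕ) : Ωs → ℝ)) ω ∂P = _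
  have hμ : ∫ ω, (Y ω : ℝ) ∂P = pmfMean p := integral_cast_of_dist hY hdist hfin
  have : ((fun ω => (Y ω : ℝ)) - fun _ => ∫ ω, (Y ω : ℝ) ∂P) ^ (2:ℕ)
      = fun ω => ((Y ω : ℝ) - pmfMean p) ^ 2 := by
    ext ω; simp [hμ, pow_two]
  rw [this]
  have : ∫ ω, ((Y ω : ℝ) - pmfMean p) ^ 2 ∂P
      = ∫ n, ((n : ℝ) - pmfMean p) ^ 2 ∂(P.map Y) :=
    (integral_map (f := fun n : ℕ => ((n:ℝ) - pmfMean p) ^ 2) hY.aemeasurable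
      (measurable_from_top.aestronglyMeasurable)).symm
  rw [this, hdist, pmf_integral (summable_sq_shift hfin _)]
  rfl

end moments
end DBPCaux

namespace DBPCaux
variable {Ωs : Type*} [MeasurableSpace Ωs] {P : Measure Ωs} [IsProbabilityMeasure P]
  {Lo Lc : PMF ℕ} {k₀ : ℕ}

/-- version of the process defined pointwise from the basic variables -/
def Zaux (B : DBPC P Lo Lc k₀) : ℕ → Ωs → ℕ
  | 0 => fun _ => k₀
  | n + 1 => fun ω => (∑ i ∈ Finset.Icc 1 (Zaux B n ω), B.X (n + 1) i ω) +
      ∑ i ∈ Finset.Icc 1 (Zaux B n ω), ∑ j ∈ Finset.Ico 1 i, B.Y (n + 1) i j ω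

lemma measurable_Zaux_Fsig (B : DBPC P Lo Lc k₀) (n : ℕ) :
    Measurable[Fsig B n] (Zaux B n) := by
  induction n with
  | zero => exact measurable_const
  | succ n ih =>
    have hmX : ∀ i, Measurable[Fsig B (n+1)] (B.X (n+1) i) := fun i =>
      measurable_vars_Fsig B (p := Sum.inl (n+1, i)) le_rfl
    have hmY : ∀ i j, Measurable[Fsig B (n+1)] (B.Y (n+1) i j) := fun i j =>
      measurable_vars_Fsig B (p := Sum.inr (n+1, i, j)) le_rfl
    have hW : ∀ k, Measurable[Fsig B (n+1)]
        (fun ω => (∑ i ∈ Finset.Icc 1 k, B.X (n + 1) i ω) +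
          ∑ i ∈ Finset.Icc 1 k, ∑ j ∈ Finset.Ico 1 i, B.Y (n + 1) i j ω) := by
      intro k
      apply Measurable.add
      · exact Finset.measurable_sum _ fun i _ => hmX i
      · exact Finset.measurable_sum _ fun i _ =>
          Finset.measurable_sum _ fun j _ => hmY i j
    exact measurable_comp_nat (g := Zaux B n)
      (W := fun k ω => (∑ i ∈ Finset.Icc 1 k, B.X (n + 1) i ω) +
        ∑ i ∈ Finset.Icc 1 k, ∑ j ∈ Finset.Ico 1 i, B.Y (n + 1) i j ω)
      (ih.mono (Fsig_mono B (Nat.le_succ n)) le_rfl) hW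

lemma measurable_Zaux (B : DBPC P Lo Lc k₀) (n : ℕ) : Measurable (Zaux B n) :=
  (measurable_Zaux_Fsig B n).mono (Fsig_le B n) le_rfl

lemma Zaux_ae (B : DBPC P Lo Lc k₀) : ∀ᵐ ω ∂P, ∀ n, B.Z n ω = Zaux B n ω := by
  rw [ae_all_iff]
  intro n
  induction n with
  | zero => exact B.init
  | succ n ih =>
    filter_upwards [ih, B.step n] with ω h1 h2
    rw [h2, h1]
    rfl

end DBPCaux

namespace DBPCaux
variable {Ωs : Type*} [MeasurableSpace Ωs] {P : Measure Ωs} [IsProbabilityMeasure P]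
  {Lo Lc : PMF ℕ} {k₀ : ℕ}

/-- the pair Finset for `k` individuals -/
def pairs (k : ℕ) : Finset ((_ : ℕ) × ℕ) := (Finset.Icc 1 k).sigma fun i => Finset.Ico 1 i

/-- sum of the cooperation variables of generation `n` among `k` individuals, as a real -/
def Treal (B : DBPC P Lo Lc k₀) (n k : ℕ) : Ωs → ℝ :=
  fun ω => ∑ q ∈ pairs k, (B.Y n q.1 q.2 ω : ℝ)

lemma cast_pairSum (B : DBPC P Lo Lc k₀) (n k : ℕ) (ω : Ωs) :
    ((∑ i ∈ Finset.Icc 1 k, ∑ j ∈ Finset.Ico 1 i, B.Y n i j ω : ℕ) : ℝ)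
      = Treal B n k ω := by
  rw [Treal, pairs, Finset.sum_sigma]
  push_cast
  rfl

lemma measurable_Treal_Gsig (B : DBPC P Lo Lc k₀) (n k : ℕ) :
    Measurable[Gsig B n] (Treal B n k) :=
  Finset.measurable_sum _ fun q _ =>
    (measurable_from_top (f := fun i : ℕ => (i : ℝ))).comp (measurable_Y_Gsig B)

lemma memℒp_Y (B : DBPC P Lo Lc k₀)
    (hfin : Summable fun j : ℕ => (j : ℝ) ^ 2 * (Lc j).toReal) (n i j : ℕ) :
    MemLp (fun ω => (B.Y n i j ω : ℝ)) 2 P :=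
  memℒp_cast_of_dist (B.measY n i j) (B.distY n i j) hfin

lemma memℒp_Treal (B : DBPC P Lo Lc k₀)
    (hfin : Summable fun j : ℕ => (j : ℝ) ^ 2 * (Lc j).toReal) (n k : ℕ) :
    MemLp (Treal B n k) 2 P := by
  have : Treal B n k = ∑ q ∈ pairs k, (fun ω => (B.Y n q.1 q.2 ω : ℝ)) := by
    ext ω; rw [Treal, Finset.sum_apply]
  rw [this]
  exact memLp_finset_sum' _ fun q _ => memℒp_Y B hfin n q.1 q.2

lemma indepFun_Y_pairs (B : DBPC P Lo Lc k₀) (n : ℕ) {q q' : (_ : ℕ) × ℕ} (hne : q ≠ q') :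
    IndepFun (fun ω => (B.Y n q.1 q.2 ω : ℝ)) (fun ω => (B.Y n q'.1 q'.2 ω : ℝ)) P := by
  have hne' : (Sum.inr (n, q.1, q.2) : Idx) ≠ Sum.inr (n, q'.1, q'.2) := by
    intro h
    apply hne
    obtain ⟨a, b⟩ := q
    obtain ⟨a', b'⟩ := q'
    simp only [Sum.inr.injEq, Prod.mk.injEq] at h
    obtain ⟨-, h1, h2⟩ := h
    subst h1; subst h2; rfl
  have h := B.indep.indepFun hne'
  exact h.comp (measurable_from_top (f := fun i : ℕ => (i : ℝ)))
    (measurable_from_top (f := fun i : ℕ => (i : ℝ)))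

lemma integral_Treal (B : DBPC P Lo Lc k₀)
    (hfin : Summable fun j : ℕ => (j : ℝ) ^ 2 * (Lc j).toReal) (n k : ℕ) :
    ∫ ω, Treal B n k ω ∂P = ((pairs k).card : ℝ) * pmfMean Lc := by
  simp only [Treal]
  rw [integral_finset_sum _ fun q _ => (memℒp_Y B hfin n q.1 q.2).integrable one_le_two]
  rw [Finset.sum_congr rfl fun q _ =>
    integral_cast_of_dist (B.measY n q.1 q.2) (B.distY n q.1 q.2) hfin]
  rw [Finset.sum_const, nsmul_eq_mul]

lemma variance_Treal (B : DBPC P Lo Lc k₀)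
    (hfin : Summable fun j : ℕ => (j : ℝ) ^ 2 * (Lc j).toReal) (n k : ℕ) :
    variance (Treal B n k) P = ((pairs k).card : ℝ) * pmfVar Lc := by
  have hT : Treal B n k = ∑ q ∈ pairs k, (fun ω => (B.Y n q.1 q.2 ω : ℝ)) := by
    ext ω; rw [Treal, Finset.sum_apply]
  rw [hT, IndepFun.variance_sum (fun q _ => memℒp_Y B hfin n q.1 q.2)
    (fun q _ q' _ hne => indepFun_Y_pairs B n hne)]
  rw [Finset.sum_congr rfl fun q _ =>
    variance_cast_of_dist (B.measY n q.1 q.2) (B.distY n q.1 q.2) hfin]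
  rw [Finset.sum_const, nsmul_eq_mul]

lemma card_pairs_real {k : ℕ} (hk : 2 ≤ (k : ℝ)) :
    ((pairs k).card : ℝ) = (k : ℝ) * ((k : ℝ) - 1) / 2 := by
  have hk1 : (1:ℝ) ≤ (k:ℝ) := by linarith
  have hk' : 1 ≤ k := by exact_mod_cast hk1
  have := two_mul_card_pairs k
  have hcast : (2 : ℝ) * ((pairs k).card : ℝ) = (k : ℝ) * ((k : ℝ) - 1) := by
    rw [show ((k:ℝ) - 1) = ((k - 1 : ℕ) : ℝ) by rw [Nat.cast_sub hk']; norm_num]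
    exact_mod_cast congrArg (fun x : ℕ => (x : ℝ)) this
  linarith

lemma Treal_lower_tail (B : DBPC P Lo Lc k₀)
    (hfin : Summable fun j : ℕ => (j : ℝ) ^ 2 * (Lc j).toReal)
    (n k : ℕ) {t μ' ν' : ℝ} (hμ'0 : 0 < μ') (hν'0 : 0 < ν')
    (hμ' : μ' ≤ pmfMean Lc) (hν' : pmfVar Lc ≤ ν')
    (hk : 2 ≤ (k : ℝ)) (ht : t ≤ μ' * ((k : ℝ) * ((k : ℝ) - 1)) / 4) :
    P {ω | Treal B n k ω < t}
      ≤ ENNReal.ofReal (8 * ν' / (μ' ^ 2 * ((k : ℝ) * ((k : ℝ) - 1)))) := by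
  set M : ℝ := (k : ℝ) * ((k : ℝ) - 1) / 2 with hM
  have hMpos : 0 < M := by
    have : (0:ℝ) < (k:ℝ) * ((k:ℝ) - 1) := by nlinarith
    positivity
  have hE : ∫ ω, Treal B n k ω ∂P = M * pmfMean Lc := by
    rw [integral_Treal B hfin, card_pairs_real hk]
  have hVar : variance (Treal B n k) P = M * pmfVar Lc := by
    rw [variance_Treal B hfin, card_pairs_real hk]
  set c : ℝ := M * pmfMean Lc - t with hc
  have hc0 : 0 < c := by
    have h1 : M * μ' ≤ M * pmfMean Lc := by
      exact mul_le_mul_of_nonneg_left hμ' hMpos.le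
    have h2 : t ≤ M * μ' / 2 := by rw [hM]; linarith [ht]
    nlinarith
  have hsub : {ω | Treal B n k ω < t} ⊆ {ω | c ≤ |Treal B n k ω - P[Treal B n k]|} := by
    intro ω hω
    simp only [Set.mem_setOf_eq] at hω ⊢
    have : Treal B n k ω - ∫ ω, Treal B n k ω ∂P ≤ -c := by rw [hc, hE] at *; linarith
    calc c ≤ -(Treal B n k ω - ∫ ω, Treal B n k ω ∂P) := by linarith
      _ ≤ |Treal B n k ω - ∫ ω, Treal B n k ω ∂P| := neg_le_abs _
  refine le_trans (measure_mono hsub) (le_trans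
    (meas_ge_le_variance_div_sq (memℒp_Treal B hfin n k) hc0) (ENNReal.ofReal_le_ofReal ?_))
  -- variance (Treal) / c^2 ≤ 8ν'/(μ'^2 k(k-1))
  rw [hVar]
  have hvar0 : 0 ≤ pmfVar Lc := by
    rw [pmfVar]
    exact tsum_nonneg fun j => by positivity
  have hcge : M * μ' / 2 ≤ c := by
    have h1 : M * μ' ≤ M * pmfMean Lc := mul_le_mul_of_nonneg_left hμ' hMpos.le
    have h2 : t ≤ M * μ' / 2 := by rw [hM]; linarith [ht]
    linarith
  have hc2 : (M * μ' / 2) ^ 2 ≤ c ^ 2 := by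
    apply sq_le_sq' <;> nlinarith
  have hnum : M * pmfVar Lc ≤ M * ν' := mul_le_mul_of_nonneg_left hν' hMpos.le
  have hd0 : (0:ℝ) < (M * μ' / 2) ^ 2 := by positivity
  have hkk : (0:ℝ) < (k : ℝ) * ((k : ℝ) - 1) := by nlinarith
  have heq : M * ν' / (M * μ' / 2) ^ 2 = 8 * ν' / (μ' ^ 2 * ((k : ℝ) * ((k : ℝ) - 1))) := by
    have h1 : ((M * μ' / 2) ^ 2) ≠ 0 := ne_of_gt hd0
    have h2 : (μ' ^ 2 * ((k : ℝ) * ((k : ℝ) - 1))) ≠ 0 :=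
      ne_of_gt (mul_pos (pow_pos hμ'0 2) hkk)
    rw [div_eq_div_iff h1 h2, hM]
    ring
  calc M * pmfVar Lc / c ^ 2 ≤ M * ν' / (M * μ' / 2) ^ 2 := by
        apply div_le_div₀ (by positivity) hnum hd0 hc2
    _ = 8 * ν' / (μ' ^ 2 * ((k : ℝ) * ((k : ℝ) - 1))) := heq
  
end DBPCaux

namespace DBPCaux
variable {Ωs : Type*} [MeasurableSpace Ωs] {P : Measure Ωs} [IsProbabilityMeasure P]
  {Lo Lc : PMF ℕ} {k₀ : ℕ}

lemma measurable_Zaux_real_Fsig (B : DBPC P Lo Lc k₀) (n : ℕ) :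
    Measurable[Fsig B n] (fun ω => ((Zaux B n ω : ℕ) : ℝ)) :=
  (measurable_from_top (f := fun i : ℕ => (i : ℝ))).comp (measurable_Zaux_Fsig B n)

lemma Zaux_succ (B : DBPC P Lo Lc k₀) (n : ℕ) (ω : Ωs) :
    Zaux B (n + 1) ω = (∑ i ∈ Finset.Icc 1 (Zaux B n ω), B.X (n + 1) i ω) +
      ∑ i ∈ Finset.Icc 1 (Zaux B n ω), ∑ j ∈ Finset.Ico 1 i, B.Y (n + 1) i j ω := rfl

lemma dbpc_extinction_bound (B : DBPC P Lo Lc k₀)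
    (hfin : Summable fun j : ℕ => (j : ℝ) ^ 2 * (Lc j).toReal)
    {μ' ν' : ℝ} (hμ'0 : 0 < μ') (hν'0 : 0 < ν')
    (hμ' : μ' ≤ pmfMean Lc) (hν' : pmfVar Lc ≤ ν')
    (g : ℕ) {b : ℝ} (hb : 2 + 8 / μ' ≤ b) :
    P ({ω | b ≤ (B.Z g ω : ℝ)} ∩ {ω | ∃ i : ℕ, B.Z (g + i) ω = 0})
      ≤ P {ω | b ≤ (B.Z g ω : ℝ)} * ENNReal.ofReal (64 * ν' / (3 * μ' ^ 2 * b ^ 2)) := by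
  classical
  have hb2 : (2:ℝ) ≤ b := by
    have : (0:ℝ) < 8 / μ' := by positivity
    linarith
  have hb0 : (0:ℝ) < b := by linarith
  -- the threshold sequence
  set t : ℕ → ℝ := fun i => Nat.rec b (fun _ s => μ' * (s * (s - 1)) / 4) i with htdef
  have ht0 : t 0 = b := rfl
  have htsucc : ∀ i, t (i + 1) = μ' * (t i * (t i - 1)) / 4 := fun i => rfl
  have hkey : ∀ i, (2 + 8 / μ' ≤ t i) ∧ (b * 2 ^ i ≤ t i) := by
    intro i
    induction i with
    | zero => exact ⟨hb, by rw [ht0]; norm_num⟩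
    | succ i ih =>
      obtain ⟨h1, h2⟩ := ih
      have htipos : 0 < t i := by
        have : (0:ℝ) < 8 / μ' := by positivity
        linarith
      have h8 : 8 ≤ μ' * (t i - 1) := by
        have h81 : 8 / μ' ≤ t i - 1 := by linarith
        calc (8:ℝ) = μ' * (8 / μ') := by field_simp
          _ ≤ μ' * (t i - 1) := mul_le_mul_of_nonneg_left h81 hμ'0.le
      have hdouble : 2 * t i ≤ t (i + 1) := by
        rw [htsucc]
        nlinarith
      refine ⟨by linarith, ?_⟩
      have hh : b * 2 ^ (i + 1) = 2 * (b * 2 ^ i) := by ring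
      rw [hh]
      linarith
  have htpos : ∀ i, 0 < t i := by
    intro i
    have : (0:ℝ) < 8 / μ' := by positivity
    linarith [(hkey i).1]
  have ht2 : ∀ i, 2 ≤ t i := by
    intro i
    have : (0:ℝ) < 8 / μ' := by positivity
    linarith [(hkey i).1]
  -- switch to the pointwise-defined process
  set A' : Set Ωs := {ω | b ≤ ((Zaux B g ω : ℕ) : ℝ)} with hA'def
  have haeA : P {ω | b ≤ ((B.Z g ω : ℕ) : ℝ)} = P A' := by
    apply measure_congr
    rw [Filter.eventuallyEq_set]
    filter_upwards [Zaux_ae B] with ω h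
    rw [h g]
    exact Iff.rfl
  have haeI : P ({ω | b ≤ ((B.Z g ω : ℕ) : ℝ)} ∩ {ω | ∃ i : ℕ, B.Z (g + i) ω = 0})
      = P (A' ∩ {ω | ∃ i : ℕ, Zaux B (g + i) ω = 0}) := by
    apply measure_congr
    rw [Filter.eventuallyEq_set]
    filter_upwards [Zaux_ae B] with ω h
    simp only [Set.mem_inter_iff, Set.mem_setOf_eq, hA'def, Set.mem_setOf_eq, h g]
    constructor
    · rintro ⟨h1, i, h2⟩; exact ⟨h1, i, by rw [← h (g + i)]; exact h2⟩
    · rintro ⟨h1, i, h2⟩; exact ⟨h1, i, by rw [h (g + i)]; exact h2⟩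
  rw [haeA, haeI]
  -- the good events
  set Gs : ℕ → Set Ωs := fun i => ⋂ j ∈ Set.Iic i, {ω | t j ≤ ((Zaux B (g + j) ω : ℕ) : ℝ)}
    with hGdef
  set C : ℕ → Set Ωs := fun i => Gs i ∩ {ω | ((Zaux B (g + i + 1) ω : ℕ) : ℝ) < t (i + 1)}
    with hCdef
  have hGsubA : ∀ i, Gs i ⊆ A' := by
    intro i ω hω
    have h := Set.mem_iInter₂.1 hω 0 (Set.mem_Iic.2 (Nat.zero_le i))
    rw [Set.mem_setOf_eq, ht0] at h
    exact h
  have hGmeas : ∀ i, MeasurableSet[Fsig B (g + i)] (Gs i) := by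
    intro i
    refine MeasurableSet.biInter (Set.to_countable _) fun j hj => ?_
    have hm : Measurable[Fsig B (g + i)] (fun ω => ((Zaux B (g + j) ω : ℕ) : ℝ)) :=
      (measurable_Zaux_real_Fsig B (g + j)).mono
        (Fsig_mono B (Nat.add_le_add_left (Set.mem_Iic.1 hj) g)) le_rfl
    exact hm measurableSet_Ici
  -- covering by first-failure events
  have hcover : A' ∩ {ω | ∃ i : ℕ, Zaux B (g + i) ω = 0} ⊆ ⋃ i, C i := by
    rintro ω ⟨hA, i₀, h0⟩
    have hQ : ∃ m : ℕ, ((Zaux B (g + m) ω : ℕ) : ℝ) < t m := by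
      refine ⟨i₀, ?_⟩
      rw [h0]
      exact_mod_cast htpos i₀
    have hn₀ := Nat.find_spec hQ
    have hne : Nat.find hQ ≠ 0 := by
      intro h
      rw [h, ht0] at hn₀
      rw [hA'def, Set.mem_setOf_eq] at hA
      simp only [Nat.add_zero] at hn₀
      linarith
    obtain ⟨i, hi⟩ : ∃ i, Nat.find hQ = i + 1 := ⟨Nat.find hQ - 1, by omega⟩
    refine Set.mem_iUnion.2 ⟨i, ⟨?_, ?_⟩⟩
    · refine Set.mem_iInter₂.2 fun j hj => ?_
      have hj' := Set.mem_Iic.1 hj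
      have hjlt : j < Nat.find hQ := by omega
      have hmin := Nat.find_min hQ hjlt
      rw [Set.mem_setOf_eq]
      linarith [not_lt.1 hmin]
    · rw [hi] at hn₀
      exact hn₀
  set ε : ℕ → ℝ := fun i => (16 * ν' / (μ' ^ 2 * b ^ 2)) * (1 / 4) ^ i with hεdef
  have hε0 : ∀ i, 0 ≤ ε i := fun i => by positivity
  have hCbound : ∀ i, P (C i) ≤ P A' * ENNReal.ofReal (ε i) := by
    intro i
    have hsubC : C i ⊆ ⋃ k : ℕ,
        ((Gs i ∩ {ω | Zaux B (g + i) ω = k}) ∩ {ω | Treal B (g + i + 1) k ω < t (i + 1)}) := by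
      rintro ω ⟨hG, hlt⟩
      refine Set.mem_iUnion.2 ⟨Zaux B (g + i) ω, ⟨⟨hG, rfl⟩, ?_⟩⟩
      rw [Set.mem_setOf_eq]
      rw [Set.mem_setOf_eq] at hlt
      have hle : (∑ i' ∈ Finset.Icc 1 (Zaux B (g + i) ω), ∑ j ∈ Finset.Ico 1 i',
          B.Y (g + i + 1) i' j ω) ≤ Zaux B (g + i + 1) ω := by
        rw [Zaux_succ]
        exact Nat.le_add_left _ _
      calc Treal B (g + i + 1) (Zaux B (g + i) ω) ω
          = ((∑ i' ∈ Finset.Icc 1 (Zaux B (g + i) ω), ∑ j ∈ Finset.Ico 1 i',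
              B.Y (g + i + 1) i' j ω : ℕ) : ℝ) := (cast_pairSum B (g + i + 1) _ ω).symm
        _ ≤ ((Zaux B (g + i + 1) ω : ℕ) : ℝ) := Nat.cast_le.2 hle
        _ < t (i + 1) := hlt
    have hterm : ∀ k : ℕ,
        P ((Gs i ∩ {ω | Zaux B (g + i) ω = k}) ∩ {ω | Treal B (g + i + 1) k ω < t (i + 1)})
          ≤ P (Gs i ∩ {ω | Zaux B (g + i) ω = k}) * ENNReal.ofReal (ε i) := by
      intro k
      by_cases hk : (k : ℝ) < t i
      · have hempty : Gs i ∩ {ω | Zaux B (g + i) ω = k} = ∅ := by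
          ext ω
          simp only [Set.mem_inter_iff, Set.mem_empty_iff_false, iff_false, not_and]
          intro hG hk'
          have h := Set.mem_iInter₂.1 hG i (Set.mem_Iic.2 le_rfl)
          rw [Set.mem_setOf_eq] at h
          rw [Set.mem_setOf_eq] at hk'
          rw [hk'] at h
          linarith
        calc P _ ≤ P (Gs i ∩ {ω | Zaux B (g + i) ω = k}) :=
              measure_mono Set.inter_subset_left
          _ = 0 := by rw [hempty, measure_empty]
          _ ≤ _ := zero_le
      · push_neg at hk
        have hk2 : (2:ℝ) ≤ (k:ℝ) := le_trans (ht2 i) hk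
        have hsmeas : MeasurableSet[Fsig B (g + i)] (Gs i ∩ {ω | Zaux B (g + i) ω = k}) :=
          (hGmeas i).inter (measurable_Zaux_Fsig B (g + i) (measurableSet_singleton k))
        have htmeas : MeasurableSet[Gsig B (g + i + 1)]
            {ω | Treal B (g + i + 1) k ω < t (i + 1)} :=
          measurableSet_lt (measurable_Treal_Gsig B (g + i + 1) k) measurable_const
        have hprod := (Indep_iff _ _ P).1 (indep_Fsig_Gsig B (g + i)) _ _ hsmeas htmeas
        rw [hprod]
        have httineq : t (i + 1) ≤ μ' * ((k:ℝ) * ((k:ℝ) - 1)) / 4 := by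
          rw [htsucc]
          have h1 : t i * (t i - 1) ≤ (k:ℝ) * ((k:ℝ) - 1) := by nlinarith [ht2 i, hk]
          have h2 := mul_le_mul_of_nonneg_left h1 hμ'0.le
          linarith
        have hcheb := Treal_lower_tail B hfin (g + i + 1) k hμ'0 hν'0 hμ' hν' hk2 httineq
        refine mul_le_mul' le_rfl (le_trans hcheb (ENNReal.ofReal_le_ofReal ?_))
        have h4 : ((2:ℝ) ^ i) ^ 2 = 4 ^ i := by
          rw [show (4:ℝ) = 2 ^ 2 by norm_num, ← pow_mul, ← pow_mul, mul_comm]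
        have hbig : b ^ 2 * 4 ^ i / 2 ≤ (k:ℝ) * ((k:ℝ) - 1) := by
          have hbb : b * 2 ^ i ≤ t i := (hkey i).2
          have h2ti : 2 ≤ t i := ht2 i
          have ha : t i * (t i - 1) ≤ (k:ℝ) * ((k:ℝ) - 1) := by nlinarith
          have hc : t i ^ 2 / 2 ≤ t i * (t i - 1) := by nlinarith
          have hd : b ^ 2 * 4 ^ i ≤ t i ^ 2 := by
            have h0 : (0:ℝ) ≤ b * 2 ^ i := by positivity
            calc b ^ 2 * 4 ^ i = (b * 2 ^ i) ^ 2 := by rw [mul_pow, h4]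
              _ ≤ t i ^ 2 := by nlinarith
          linarith
        have hkkpos : (0:ℝ) < (k:ℝ) * ((k:ℝ) - 1) := by nlinarith
        have hmain : 8 * ν' / (μ' ^ 2 * ((k:ℝ) * ((k:ℝ) - 1)))
            ≤ 8 * ν' / (μ' ^ 2 * (b ^ 2 * 4 ^ i / 2)) := by
          apply div_le_div_of_nonneg_left (by positivity) (by positivity)
          exact mul_le_mul_of_nonneg_left hbig (by positivity)
        refine le_trans hmain (le_of_eq ?_)
        have h14 : ((1:ℝ) / 4) ^ i = 1 / 4 ^ i := by rw [div_pow, one_pow]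
        rw [hεdef]
        show 8 * ν' / (μ' ^ 2 * (b ^ 2 * 4 ^ i / 2)) = 16 * ν' / (μ' ^ 2 * b ^ 2) * (1 / 4) ^ i
        rw [h14]
        have h4pos : (0:ℝ) < (4:ℝ) ^ i := by positivity
        field_simp
        ring
    have hdisj : Pairwise (Function.onFun Disjoint
        fun k : ℕ => Gs i ∩ {ω | Zaux B (g + i) ω = k}) := by
      intro k k' hkk'
      apply Set.disjoint_left.2
      rintro ω ⟨-, h1⟩ ⟨-, h2⟩
      rw [Set.mem_setOf_eq] at h1 h2
      exact hkk' (h1 ▸ h2 ▸ rfl)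
    have hmeas' : ∀ k : ℕ, MeasurableSet (Gs i ∩ {ω | Zaux B (g + i) ω = k}) := fun k =>
      Fsig_le B (g + i) _ ((hGmeas i).inter
        (measurable_Zaux_Fsig B (g + i) (measurableSet_singleton k)))
    calc P (C i) ≤ P (⋃ k : ℕ,
          ((Gs i ∩ {ω | Zaux B (g + i) ω = k}) ∩ {ω | Treal B (g + i + 1) k ω < t (i + 1)})) :=
          measure_mono hsubC
      _ ≤ ∑' k : ℕ, P ((Gs i ∩ {ω | Zaux B (g + i) ω = k})
            ∩ {ω | Treal B (g + i + 1) k ω < t (i + 1)}) := measure_iUnion_le _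
      _ ≤ ∑' k : ℕ, P (Gs i ∩ {ω | Zaux B (g + i) ω = k}) * ENNReal.ofReal (ε i) :=
          ENNReal.tsum_le_tsum hterm
      _ = (∑' k : ℕ, P (Gs i ∩ {ω | Zaux B (g + i) ω = k})) * ENNReal.ofReal (ε i) :=
          ENNReal.tsum_mul_right
      _ ≤ P A' * ENNReal.ofReal (ε i) := by
          apply mul_le_mul_left
          rw [← measure_iUnion hdisj hmeas']
          apply measure_mono
          intro ω hω
          obtain ⟨k, hk⟩ := Set.mem_iUnion.1 hω
          exact hGsubA i hk.1
  -- final assembly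
  have hgeo : Summable fun i : ℕ => ε i :=
    (summable_geometric_of_lt_one (by norm_num) (by norm_num)).mul_left _
  calc P (A' ∩ {ω | ∃ i : ℕ, Zaux B (g + i) ω = 0})
      ≤ P (⋃ i, C i) := measure_mono hcover
    _ ≤ ∑' i, P (C i) := measure_iUnion_le _
    _ ≤ ∑' i, P A' * ENNReal.ofReal (ε i) := ENNReal.tsum_le_tsum hCbound
    _ = P A' * ∑' i, ENNReal.ofReal (ε i) := ENNReal.tsum_mul_left
    _ = P A' * ENNReal.ofReal (64 * ν' / (3 * μ' ^ 2 * b ^ 2)) := by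
        congr 1
        rw [← ENNReal.ofReal_tsum_of_nonneg hε0 hgeo]
        congr 1
        rw [hεdef]
        rw [tsum_mul_left, tsum_geometric_of_lt_one (by norm_num) (by norm_num)]
        have hb' : b ≠ 0 := ne_of_gt hb0
        have hμ'' : μ' ≠ 0 := ne_of_gt hμ'0
        field_simp
        ring

end DBPCaux


open DBPCaux in
/-- For a sequence of DBPCs satisfying Assumption A (means and variances of
the offspring and cooperation distributions converge to finite positive
limits), conditioned on reaching a level `b N → ∞` at generation `g`, the
processes survive with probability tending to `1`. -/
theorem dbpc_conditional_survival_tendsto_one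
    (Ω : ℕ → Type*) [∀ N, MeasurableSpace (Ω N)]
    (P : ∀ N, Measure (Ω N)) [∀ N, IsProbabilityMeasure (P N)]
    (Lo Lc : ℕ → PMF ℕ) (k₀ : ℕ → ℕ)
    (B : ∀ N, DBPC (P N) (Lo N) (Lc N) (k₀ N))
    (μo μc νo νc : ℝ) (hμo : 0 < μo) (hμc : 0 < μc) (hνo : 0 < νo) (hνc : 0 < νc)
    (hfinLo : ∀ N, Summable (fun j : ℕ => ((j : ℝ)) ^ 2 * ((Lo N) j).toReal))
    (hfinLc : ∀ N, Summable (fun j : ℕ => ((j : ℝ)) ^ 2 * ((Lc N) j).toReal))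
    (hconvμo : Tendsto (fun N => pmfMean (Lo N)) atTop (nhds μo))
    (hconvμc : Tendsto (fun N => pmfMean (Lc N)) atTop (nhds μc))
    (hconvνo : Tendsto (fun N => pmfVar (Lo N)) atTop (nhds νo))
    (hconvνc : Tendsto (fun N => pmfVar (Lc N)) atTop (nhds νc))
    (b : ℕ → ℝ) (hbpos : ∀ N, 0 < b N) (hb : Tendsto b atTop atTop)
    (g : ℕ)
    (hpos : ∀ N, 0 < P N {ω | b N ≤ ((B N).Z g ω : ℝ)}) :
    Tendsto (fun N =>
      ((ProbabilityTheory.cond (P N) {ω | b N ≤ ((B N).Z g ω : ℝ)})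
        {ω | ∀ i : ℕ, 0 < (B N).Z (g + i) ω}).toReal) atTop (nhds 1) := by
  set μ' : ℝ := μc / 2 with hμ'def
  set ν' : ℝ := 2 * νc with hν'def
  have hμ'0 : 0 < μ' := by rw [hμ'def]; positivity
  have hν'0 : 0 < ν' := by rw [hν'def]; positivity
  set ρ : ℕ → ℝ := fun N => 64 * ν' / (3 * μ' ^ 2 * (b N) ^ 2) with hρdef
  have hρ0 : ∀ N, 0 ≤ ρ N := by
    intro N
    have := hbpos N
    rw [hρdef]
    positivity
  -- eventual bounds
  have hev : ∀ᶠ N in atTop, (μ' ≤ pmfMean (Lc N)) ∧ (pmfVar (Lc N) ≤ ν')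
      ∧ (2 + 8 / μ' ≤ b N) := by
    have h1 : ∀ᶠ N in atTop, μ' ≤ pmfMean (Lc N) :=
      hconvμc.eventually (eventually_ge_nhds (by rw [hμ'def]; linarith))
    have h2 : ∀ᶠ N in atTop, pmfVar (Lc N) ≤ ν' :=
      hconvνc.eventually (eventually_le_nhds (by rw [hν'def]; linarith))
    have h3 : ∀ᶠ N in atTop, 2 + 8 / μ' ≤ b N := hb.eventually_ge_atTop _
    filter_upwards [h1, h2, h3] with N a1 a2 a3
    exact ⟨a1, a2, a3⟩
  -- pointwise bounds for good N
  have hbound : ∀ᶠ N in atTop,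
      1 - ρ N ≤ ((ProbabilityTheory.cond (P N) {ω | b N ≤ ((B N).Z g ω : ℝ)})
        {ω | ∀ i : ℕ, 0 < (B N).Z (g + i) ω}).toReal
      ∧ ((ProbabilityTheory.cond (P N) {ω | b N ≤ ((B N).Z g ω : ℝ)})
        {ω | ∀ i : ℕ, 0 < (B N).Z (g + i) ω}).toReal ≤ 1 := by
    filter_upwards [hev] with N hN
    obtain ⟨h1, h2, h3⟩ := hN
    set A : Set (Ω N) := {ω | b N ≤ ((B N).Z g ω : ℝ)} with hAdef
    set S : Set (Ω N) := {ω | ∀ i : ℕ, 0 < (B N).Z (g + i) ω} with hSdef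
    have hAmeas : MeasurableSet A := by
      have : Measurable fun ω => (((B N).Z g ω : ℕ) : ℝ) :=
        (measurable_from_top (f := fun i : ℕ => (i : ℝ))).comp ((B N).measZ g)
      exact this measurableSet_Ici
    have hSmeas : MeasurableSet S := by
      have hSeq : S = ⋂ i : ℕ, {ω | 0 < (B N).Z (g + i) ω} := by
        ext ω; simp only [hSdef, Set.mem_setOf_eq, Set.mem_iInter]
      rw [hSeq]
      refine MeasurableSet.iInter fun i => ?_
      exact (B N).measZ (g + i) (measurableSet_Ioi (a := 0))
    have hScompl : A ∩ Sᶜ = A ∩ {ω | ∃ i : ℕ, (B N).Z (g + i) ω = 0} := by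
      congr 1
      ext ω
      simp only [hSdef, Set.mem_compl_iff, Set.mem_setOf_eq, not_forall, not_lt, Nat.le_zero]
    have hext := dbpc_extinction_bound (B N) (hfinLc N) hμ'0 hν'0 h1 h2 g h3
    have hPA0 : P N A ≠ 0 := (hpos N).ne'
    have hPAfin : P N A ≠ ⊤ := measure_ne_top _ _
    set a : ℝ := (P N A).toReal with hadef
    have ha0 : 0 < a := ENNReal.toReal_pos hPA0 hPAfin
    set s : ℝ := (P N (A ∩ S)).toReal with hsdef
    set e : ℝ := (P N (A ∩ Sᶜ)).toReal with hedef
    have hse : s + e = a := by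
      rw [hsdef, hedef, hadef, ← ENNReal.toReal_add (measure_ne_top _ _) (measure_ne_top _ _)]
      congr 1
      rw [Set.inter_comm A S, Set.inter_comm A Sᶜ]
      rw [← measure_inter_add_diff A hSmeas]
      congr 1
      · rw [Set.inter_comm]
      · rw [Set.diff_eq, Set.inter_comm]
    have hs0 : 0 ≤ s := ENNReal.toReal_nonneg
    have he0 : 0 ≤ e := ENNReal.toReal_nonneg
    have heb : e ≤ a * ρ N := by
      have h' : P N (A ∩ Sᶜ) ≤ P N A * ENNReal.ofReal (ρ N) := by
        rw [hScompl]
        exact hext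
      have hfin' : P N A * ENNReal.ofReal (ρ N) ≠ ⊤ :=
        ENNReal.mul_ne_top hPAfin ENNReal.ofReal_ne_top
      have := ENNReal.toReal_mono hfin' h'
      rwa [ENNReal.toReal_mul, ENNReal.toReal_ofReal (hρ0 N)] at this
    have hcond : ((ProbabilityTheory.cond (P N) A) S).toReal = s / a := by
      rw [ProbabilityTheory.cond_apply hAmeas]
      rw [ENNReal.toReal_mul, ENNReal.toReal_inv]
      rw [← hadef, ← hsdef, div_eq_inv_mul]
    rw [hcond]
    constructor
    · have hq : s / a = 1 - e / a := by
        field_simp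
        linarith
      rw [hq]
      have hq2 : e / a ≤ ρ N := by
        rw [div_le_iff₀ ha0]
        linarith [heb]
      linarith
    · rw [div_le_one ha0]
      linarith
  -- squeeze
  have hρlim : Tendsto ρ atTop (nhds 0) := by
    have hρeq : ρ = fun N => (64 * ν' / (3 * μ' ^ 2)) / (b N) ^ 2 := by
      funext N
      rw [hρdef, div_div]
    rw [hρeq]
    have hbsq : Tendsto (fun N => (b N) ^ 2) atTop atTop := by
      have := hb.atTop_mul_atTop₀ hb
      refine this.congr fun N => ?_
      rw [pow_two]
    exact Tendsto.div_atTop tendsto_const_nhds hbsq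
  have hlow : Tendsto (fun N => 1 - ρ N) atTop (nhds 1) := by
    simpa using tendsto_const_nhds.sub hρlim
  apply tendsto_of_tendsto_of_tendsto_of_le_of_le' hlow tendsto_const_nhds
  · filter_upwards [hbound] with N h
    exact h.1
  · filter_upwards [hbound] with N h
    exact h.2
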